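/- Let Γ ↷ Y be an amenable action of a countable group on a countable set, and let Γ act on X = Y × ℕ by g·(y,n) = (g·y, n). Then for every sequence (a_n) of real numbers with a_n → ∞, there exist a Følner sequence (C_n) for Γ ↷ X and a strictly increasing map φ : ℕ → ℕ such that a_{φ(n)}/|C_n| → 1. -/

import Mathlib

/-- `C` is a Følner sequence for the action of `G` on `X` given by `π`. -/
def IsFolnerSeq {G X : Type*} [Group G] (π : G →* Equiv.Perm X) (C : ℕ → Set X) : Prop :=
  (∀ n, (C n).Finite ∧ (C n).Nonempty) ∧
    ∀ g : G, Filter.Tendsto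
      (fun n => ((symmDiff (C n) (π g '' C n)).ncard : ℝ) / (C n).ncard)
      Filter.atTop (nhds 0)

/-- The action of `G` on `X` given by `π` is amenable (admits a Følner sequence). -/
def IsAmenableAction {G X : Type*} [Group G] (π : G →* Equiv.Perm X) : Prop :=
  ∃ C : ℕ → Set X, IsFolnerSeq π C

/-- The action given by `π` has infinite orbits. -/
def HasInfiniteOrbits {G X : Type*} [Group G] (π : G →* Equiv.Perm X) : Prop :=
  ∀ x : X, {y : X | ∃ g : G, π g x = y}.Infinite

/-- The action given by `π` is transitive. -/
def IsTransitiveAction {G X : Type*} [Group G] (π : G →* Equiv.Perm X) : Prop :=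
  ∀ x y : X, ∃ g : G, π g x = y

/-- The action given by `π` is almost free: every non-trivial element has finitely many
fixed points. -/
def IsAlmostFreeAction {G X : Type*} [Group G] (π : G →* Equiv.Perm X) : Prop :=
  ∀ g : G, g ≠ 1 → {x : X | π g x = x}.Finite

/-- The class 𝒜 of countable groups admitting a faithful, transitive and amenable action
on an infinite countable set. -/
def InClassA (G : Type*) [Group G] : Prop :=
  ∃ (X : Type) (_ : Countable X) (_ : Infinite X) (π : G →* Equiv.Perm X),
    Function.Injective π ∧ IsTransitiveAction π ∧ IsAmenableAction π

/-- The class 𝒜_ℱ of countable groups admitting an amenable, almost free action with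
infinite orbits on a countable set. -/
def InClassAF (G : Type*) [Group G] : Prop :=
  ∃ (X : Type) (_ : Countable X) (π : G →* Equiv.Perm X),
    IsAmenableAction π ∧ IsAlmostFreeAction π ∧ HasInfiniteOrbits π

/-- The action of `Γ` on `X = Y × ℕ` given by `g • (y, n) = (g • y, n)`. -/
def prodNatHom {Γ Y : Type*} [Group Γ] (π : Γ →* Equiv.Perm Y) :
    Γ →* Equiv.Perm (Y × ℕ) where
  toFun g := (π g).prodCongr (Equiv.refl ℕ)
  map_one' := by
    ext p
    · simp
    · simp
  map_mul' g h := by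
    ext p
    · simp
    · simp


lemma symmDiff_prod_aux {α β : Type*} [DecidableEq α] [DecidableEq β]
    (A B : Finset α) (R : Finset β) :
    symmDiff (A ×ˢ R) (B ×ˢ R) = (symmDiff A B) ×ˢ R := by
  ext ⟨x, y⟩
  simp only [Finset.mem_symmDiff, Finset.mem_product]
  tauto

/-- **Lemma 2.4.**  Let `Γ ↷ Y` be an amenable action of a countable group on a countable
set, and let `Γ` act on `X = Y × ℕ` by `g • (y, n) = (g • y, n)`.  For every sequence
`(a n)` of reals with `a n → ∞` there exist a Følner sequence `(C n)` for `Γ ↷ X` and a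
strictly increasing `φ : ℕ → ℕ` such that `a (φ n) / |C n| → 1`. -/
theorem folner_seq_with_prescribed_cardinality
    {Γ Y : Type*} [Group Γ] [Countable Γ] [Countable Y]
    (π : Γ →* Equiv.Perm Y) (hamen : IsAmenableAction π)
    (a : ℕ → ℝ) (ha : Filter.Tendsto a Filter.atTop Filter.atTop) :
    ∃ (C : ℕ → Set (Y × ℕ)) (φ : ℕ → ℕ), StrictMono φ ∧
      IsFolnerSeq (prodNatHom π) C ∧
      Filter.Tendsto (fun n => a (φ n) / ((C n).ncard : ℝ)) Filter.atTop (nhds 1) := by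
  classical
  obtain ⟨D, hD1, hD2⟩ := hamen
  set Df : ℕ → Finset Y := fun n => (hD1 n).1.toFinset with hDf
  set d : ℕ → ℕ := fun n => (Df n).card with hd
  have hDcoe : ∀ n, D n = ↑(Df n) := fun n => ((hD1 n).1.coe_toFinset).symm
  have hdpos : ∀ n, 0 < d n := fun n =>
    Finset.card_pos.2 ((hD1 n).1.toFinset_nonempty.2 (hD1 n).2)
  have hN : ∀ n : ℕ, ∃ N : ℕ, ∀ k ≥ N, ((n * d n : ℕ) : ℝ) ≤ a k := fun n =>
    Filter.eventually_atTop.1 (ha.eventually_ge_atTop _)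
  choose N hNs using hN
  set φ : ℕ → ℕ := fun n => Nat.rec (N 0) (fun k ih => max (ih + 1) (N (k + 1))) n with hφ
  have hφmono : StrictMono φ := strictMono_nat_of_lt_succ fun n =>
    lt_of_lt_of_le (Nat.lt_succ_self _) (le_max_left _ _)
  have hφN : ∀ n, N n ≤ φ n := by
    intro n; cases n with
    | zero => exact le_refl _
    | succ k => exact le_max_right _ _
  have ha' : ∀ n, ((n * d n : ℕ) : ℝ) ≤ a (φ n) := fun n => hNs n _ (hφN n)
  set m : ℕ → ℕ := fun n => max 1 ⌈a (φ n) / d n⌉₊ with hm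
  have hmpos : ∀ n, 0 < m n := fun n => lt_of_lt_of_le Nat.one_pos (le_max_left _ _)
  set C : ℕ → Set (Y × ℕ) := fun n => ↑(Df n ×ˢ Finset.range (m n)) with hC
  have hCcard : ∀ n, (C n).ncard = d n * m n := by
    intro n
    rw [hC, Set.ncard_coe_finset, Finset.card_product, Finset.card_range]
  -- image lemma
  have himg : ∀ (g : Γ) (n : ℕ),
      (prodNatHom π g) '' (C n) = ↑(((Df n).image (π g)) ×ˢ Finset.range (m n)) := by
    intro g n
    ext ⟨x, y⟩
    simp only [hC, Finset.coe_product, Set.mem_image, Set.mem_prod, Finset.mem_coe,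
      Finset.mem_product, Finset.mem_image, Finset.mem_range, Prod.exists,
      prodNatHom, MonoidHom.coe_mk, OneHom.coe_mk, Equiv.prodCongr_apply, Equiv.coe_refl,
      Prod.map_apply, id_eq, Prod.mk.injEq]
    constructor
    · rintro ⟨u, v, ⟨hu, hv⟩, rfl, rfl⟩
      exact ⟨⟨u, hu, rfl⟩, hv⟩
    · rintro ⟨⟨u, hu, rfl⟩, hv⟩
      exact ⟨u, y, ⟨hu, hv⟩, rfl, rfl⟩
  have hsd : ∀ (g : Γ) (n : ℕ),
      (symmDiff (C n) ((prodNatHom π g) '' (C n))).ncard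
        = (symmDiff (Df n) ((Df n).image (π g))).card * m n := by
    intro g n
    rw [himg, hC, ← Finset.coe_symmDiff, symmDiff_prod_aux, Set.ncard_coe_finset,
      Finset.card_product, Finset.card_range]
  have hsdY : ∀ (g : Γ) (n : ℕ),
      (symmDiff (D n) (π g '' D n)).ncard = (symmDiff (Df n) ((Df n).image (π g))).card := by
    intro g n
    rw [hDcoe, ← Finset.coe_image, ← Finset.coe_symmDiff, Set.ncard_coe_finset]
  have hDcard : ∀ n, (D n).ncard = d n := fun n => by
    rw [hDcoe, Set.ncard_coe_finset]
  refine ⟨C, φ, hφmono, ⟨?_, ?_⟩, ?_⟩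
  · intro n
    exact ⟨(Df n ×ˢ Finset.range (m n)).finite_toSet,
      by
        rw [hC]
        refine Finset.coe_nonempty.2 (Finset.Nonempty.product ?_ ?_)
        · exact (hD1 n).1.toFinset_nonempty.2 (hD1 n).2
        · exact ⟨0, Finset.mem_range.2 (hmpos n)⟩⟩
  · intro g
    have := hD2 g
    convert this using 2 with n
    rw [hsd, hCcard]
    rw [hsdY, hDcard]
    push_cast
    rw [mul_div_mul_right]
    exact Nat.cast_ne_zero.2 (hmpos n).ne'
  · -- squeeze
    have hlow : Filter.Tendsto (fun n : ℕ => 1 - 1/(n:ℝ)) Filter.atTop (nhds 1) := by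
      simpa using Filter.Tendsto.sub
        (tendsto_const_nhds : Filter.Tendsto (fun _ : ℕ => (1:ℝ)) _ _)
        tendsto_one_div_atTop_nhds_zero_nat
    refine tendsto_of_tendsto_of_tendsto_of_le_of_le' hlow tendsto_const_nhds ?_ ?_
    all_goals
      rw [Filter.eventually_atTop]
      refine ⟨1, fun n hn => ?_⟩
      rw [hCcard]
      have hd1 : (1:ℝ) ≤ (d n : ℝ) := by exact_mod_cast hdpos n
      have hA : ((n : ℝ) * d n) ≤ a (φ n) := by exact_mod_cast ha' n
      have hn1 : (1:ℝ) ≤ (n:ℝ) := by exact_mod_cast hn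
      have hApos : (0:ℝ) < a (φ n) := lt_of_lt_of_le (by nlinarith) hA
      have hdiv1 : (1:ℝ) ≤ a (φ n) / d n := by
        rw [le_div_iff₀ (by linarith)]
        nlinarith
      have hmceil : m n = ⌈a (φ n) / d n⌉₊ := max_eq_right (Nat.one_le_ceil_iff.2 (by linarith))
      have hmd : a (φ n) ≤ (d n : ℝ) * m n := by
        rw [hmceil]
        have := Nat.le_ceil (a (φ n) / d n)
        calc a (φ n) = (d n : ℝ) * (a (φ n) / d n) := by field_simp
          _ ≤ (d n : ℝ) * ⌈a (φ n) / d n⌉₊ := by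
              exact mul_le_mul_of_nonneg_left this (by linarith)
      have hmd2 : (d n : ℝ) * m n ≤ a (φ n) + d n := by
        rw [hmceil]
        have hc : (⌈a (φ n) / d n⌉₊ : ℝ) < a (φ n) / d n + 1 :=
          Nat.ceil_lt_add_one (by linarith)
        calc (d n : ℝ) * ⌈a (φ n) / d n⌉₊ ≤ (d n : ℝ) * (a (φ n) / d n + 1) :=
              mul_le_mul_of_nonneg_left hc.le (by linarith)
          _ = a (φ n) + d n := by field_simp
      have hmn : (n : ℝ) ≤ (m n : ℝ) := by
        rw [hmceil]
        calc (n : ℝ) ≤ a (φ n) / d n := by rw [le_div_iff₀ (by linarith)]; nlinarith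
          _ ≤ ⌈a (φ n) / d n⌉₊ := Nat.le_ceil _
      have hdm : (0:ℝ) < (d n : ℝ) * m n := by nlinarith
      first
      | -- lower bound goal: 1 - 1/n ≤ a (φ n) / (d n * m n)
        (rw [le_div_iff₀ (by push_cast; nlinarith)]
         push_cast
         have hnd : (n : ℝ) * d n ≤ (d n : ℝ) * m n := by nlinarith
         rw [sub_mul, one_mul]
         have : (d n : ℝ) * m n / n ≥ d n := by
           rw [ge_iff_le, le_div_iff₀ (by linarith)]
           nlinarith
         have h1n : 1/(n:ℝ) * ((d n:ℝ) * m n) = (d n : ℝ) * m n / n := by ring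
         rw [h1n]
         linarith)
      | -- upper bound goal: a (φ n) / (d n * m n) ≤ 1
        (rw [div_le_one (by push_cast; nlinarith)]
         push_cast
         linarith)
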